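/- Let K > 0, S = 1/K, and let η : ℝ → ℝ satisfy η(k) ≥ 0 for all k ∈ (0, K] and η(K) = 0. Let Δt, ΔN > 0 satisfy the collision-free condition: k·η(k) ≤ (ΔN/Δt)·(1 − k/K) for all k ∈ (0, K). Suppose vehicle positions x : ℕ → ℝ (vehicle n−1 is the leader of vehicle n) satisfy x(n−1) − x(n) ≥ S·ΔN for all n ≥ 1, and the updated positions are y(n) = x(n) + Δt·η(ΔN/(x(n−1) − x(n))) for n ≥ 1, with the lead vehicle satisfying y(0) ≥ x(0). Then y(n−1) − y(n) ≥ S·ΔN for all n ≥ 1; i.e., the Godunov/car-following discretization of the LWR model remains collision-free after one time step. -/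

import Mathlib

/-- Sufficiency of the collision-free condition: under
`k·η(k) ≤ (ΔN/Δt)·(1 − k/K)` for all `k ∈ (0,K)`, the Godunov/car-following
discretization of the LWR model remains collision-free after one time step. -/
theorem collision_free_sufficient (K S ΔN Δt : ℝ) (hK : 0 < K) (hS : S = 1 / K)
    (hΔN : 0 < ΔN) (hΔt : 0 < Δt) (η : ℝ → ℝ)
    (hη : ∀ k ∈ Set.Ioc (0 : ℝ) K, 0 ≤ η k) (hηK : η K = 0)
    (hcf : ∀ k ∈ Set.Ioo (0 : ℝ) K, k * η k ≤ (ΔN / Δt) * (1 - k / K))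
    (x y : ℕ → ℝ)
    (hx : ∀ n : ℕ, 1 ≤ n → x (n - 1) - x n ≥ S * ΔN)
    (hy : ∀ n : ℕ, 1 ≤ n → y n = x n + Δt * η (ΔN / (x (n - 1) - x n)))
    (hy0 : y 0 ≥ x 0) :
    ∀ n : ℕ, 1 ≤ n → y (n - 1) - y n ≥ S * ΔN := by
  have hSpos : 0 < S * ΔN := by
    rw [hS]; positivity
  -- the density corresponding to a spacing s ≥ S*ΔN lies in (0, K]
  have hmem : ∀ s : ℝ, S * ΔN ≤ s → ΔN / s ∈ Set.Ioc (0 : ℝ) K := by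
    intro s hs
    have hspos : 0 < s := lt_of_lt_of_le hSpos hs
    constructor
    · positivity
    · rw [div_le_iff₀ hspos]
      have : S * ΔN * K ≤ s * K := by nlinarith
      calc ΔN = S * ΔN * K := by rw [hS]; field_simp
        _ ≤ K * s := by nlinarith
  have hpos : ∀ s : ℝ, S * ΔN ≤ s → 0 ≤ η (ΔN / s) := fun s hs => hη _ (hmem s hs)
  have key : ∀ s : ℝ, S * ΔN ≤ s → Δt * η (ΔN / s) ≤ s - S * ΔN := by
    intro s hs
    have hspos : 0 < s := lt_of_lt_of_le hSpos hs
    set k := ΔN / s with hk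
    have hk0 : 0 < k := (hmem s hs).1
    have hkK : k ≤ K := (hmem s hs).2
    rcases eq_or_lt_of_le hkK with heq | hlt
    · -- k = K : η K = 0, and s ≥ S*ΔN
      rw [heq, hηK, mul_zero]
      linarith
    · have hcf' := hcf k ⟨hk0, hlt⟩
      -- k * η k ≤ (ΔN/Δt) * (1 - k/K)
      have hsk : s * k = ΔN := by rw [hk]; field_simp [hspos.ne']
      have hSN : S * ΔN = ΔN / K := by rw [hS]; ring
      -- multiply by Δt/k > 0 and use s*k = ΔN
      have h1 : Δt * (k * η k) ≤ Δt * ((ΔN / Δt) * (1 - k / K)) :=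
        mul_le_mul_of_nonneg_left hcf' (le_of_lt hΔt)
      have h2 : Δt * ((ΔN / Δt) * (1 - k / K)) = ΔN - ΔN * k / K := by
        field_simp
      have h3 : Δt * (k * η k) = k * (Δt * η k) := by ring
      rw [h3, h2] at h1
      -- so k * (Δt * η k) ≤ ΔN - ΔN*k/K = k*s - k*(ΔN/K)
      have h4 : ΔN - ΔN * k / K = k * (s - ΔN / K) := by
        rw [← hsk]; field_simp
      rw [h4] at h1
      have := le_of_mul_le_mul_left (by linarith [h1] : k * (Δt * η k) ≤ k * (s - ΔN / K)) hk0
      rw [hSN]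
      exact this
  intro n hn
  have hxn := hx n hn
  have hyn := hy n hn
  have hylead : y (n - 1) ≥ x (n - 1) := by
    rcases Nat.eq_or_lt_of_le hn with h1 | h2
    · rw [← h1]; simpa using hy0
    · have hn1 : 1 ≤ n - 1 := by omega
      rw [hy (n - 1) hn1]
      have := hpos _ (hx (n - 1) hn1)
      nlinarith [this]
  have hkey := key _ hxn
  rw [hyn]
  linarith
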